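/- Let n ≥ 1 be an integer, α > −1 a real number, ξ ∈ Ω_n, d := min(n+ξ, n), and let u, v ∈ ℂ^d be unit vectors that are linearly independent over ℂ. Then there exists X in the star-subalgebra 𝒜 of Π_{η∈Ω_n} M_{d_η}(ℂ) generated by {γ(a) : a ∈ L∞_lim([0,1))} such that ⟨X_ξ u, u⟩ ≠ ⟨X_ξ v, v⟩. -/

import Mathlib

open MeasureTheory Filter
open scoped ENNReal

noncomputable section

/-- Generalized binomial coefficient `x(x-1)⋯(x-j+1)/j!`. -/
def gbinom (x : ℝ) (j : ℕ) : ℝ :=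
  (∏ i ∈ Finset.range j, (x - i)) / (Nat.factorial j)

/-- Shifted Jacobi polynomial `Q_m^{(α,β)}` on `[0,1]`:
`Q_m^{(α,β)}(t) = Σ_{k=0}^m binom(α+β+m+k,k)·binom(β+m,m-k)·(-1)^{m-k}·t^k`. -/
def jacQ (α β : ℝ) (m : ℕ) (t : ℝ) : ℝ :=
  ∑ k ∈ Finset.range (m + 1),
    gbinom (α + β + m + k) k * gbinom (β + m) (m - k) * (-1 : ℝ) ^ (m - k) * t ^ k

/-- Normalizing coefficient
`κ(α,β,m) = sqrt((2m+α+β+1)·Γ(m+α+β+1)·m!/(Γ(m+α+1)·Γ(m+β+1)))`. -/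
def jacCoef (α β : ℝ) (m : ℕ) : ℝ :=
  Real.sqrt ((2 * m + α + β + 1) * Real.Gamma (m + α + β + 1) * (Nat.factorial m) /
    (Real.Gamma (m + α + 1) * Real.Gamma (m + β + 1)))

/-- Jacobi function `J_m^{(α,β)}(t) = κ(α,β,m)·(1-t)^{α/2}·t^{β/2}·Q_m^{(α,β)}(t)`. -/
def jacJ (α β : ℝ) (m : ℕ) (t : ℝ) : ℝ :=
  jacCoef α β m * (1 - t) ^ (α / 2) * t ^ (β / 2) * jacQ α β m t

/-- `dd n ξ = min(n+ξ, n)` (for `ξ ≥ 1-n`), written as a total function into `ℕ`. -/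
def dd (n : ℕ) (ξ : ℤ) : ℕ := n - (-ξ).toNat

lemma dd_le (n : ℕ) (ξ : ℤ) : dd n ξ ≤ n := Nat.sub_le _ _

/-- The set `Ω_n = {ξ ∈ ℤ : ξ ≥ -n+1}` as a subtype. -/
abbrev Om (n : ℕ) : Type := {ξ : ℤ // 1 - (n : ℤ) ≤ ξ}

/-- The entry `γ(a)_{ξ,j,k} = κ(α,|ξ|,j)·κ(α,|ξ|,k)·
∫₀¹ a(√t)·Q_j^{(α,|ξ|)}(t)·Q_k^{(α,|ξ|)}(t)·(1-t)^α·t^{|ξ|} dt`. -/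
def gammaEnt (α : ℝ) (a : ℝ → ℂ) (ξ : ℤ) (j k : ℕ) : ℂ :=
  ((jacCoef α ξ.natAbs j * jacCoef α ξ.natAbs k : ℝ) : ℂ) *
    ∫ t in (0:ℝ)..1, a (Real.sqrt t) *
      ((jacQ α ξ.natAbs j t * jacQ α ξ.natAbs k t * (1 - t) ^ α * t ^ (ξ.natAbs) : ℝ) : ℂ)

/-- The matrix `γ(a)_ξ ∈ M_{d_ξ}(ℂ)`. -/
def gammaMat (n : ℕ) (α : ℝ) (a : ℝ → ℂ) (ξ : ℤ) :
    Matrix (Fin (dd n ξ)) (Fin (dd n ξ)) ℂ :=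
  Matrix.of fun j k => gammaEnt α a ξ (j : ℕ) (k : ℕ)

/-- Bounded measurable functions on `[0,1)` having a finite limit at `1⁻`. -/
def LinfLim (a : ℝ → ℂ) : Prop :=
  Measurable a ∧ (∃ C : ℝ, ∀ r ∈ Set.Ico (0:ℝ) 1, ‖a r‖ ≤ C) ∧
    ∃ ω : ℂ, Tendsto a (nhdsWithin 1 (Set.Ico (0:ℝ) 1)) (nhds ω)

/-- The generating symbol `g_p(t) = Q_p^{(α,0)}(t²)`, as a complex-valued function. -/
def gSym (α : ℝ) (p : ℕ) (t : ℝ) : ℂ := ((jacQ α 0 p (t ^ 2) : ℝ) : ℂ)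

/-- `⟨A w, w⟩ = Σ_{j,k} conj(w_j)·A_{j,k}·w_k`. -/
def innerForm {d : ℕ} (A : Matrix (Fin d) (Fin d) ℂ) (w : Fin d → ℂ) : ℂ :=
  ∑ j : Fin d, ∑ k : Fin d, (starRingEnd ℂ) (w j) * A j k * w k

namespace Stmt13Aux

open MeasureTheory Filter

/-- The real integrand of `gammaEnt`. -/
def ff (α : ℝ) (b : ℕ) (j k : ℕ) (t : ℝ) : ℝ :=
  jacQ α b j t * jacQ α b k t * (1 - t) ^ α * t ^ b

lemma continuous_jacQ (α β : ℝ) (m : ℕ) : Continuous (fun t => jacQ α β m t) := by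
  unfold jacQ
  exact continuous_finset_sum _ fun k _ => continuous_const.mul (continuous_pow k)

lemma ff_continuousAt {α : ℝ} (b j k : ℕ) {s : ℝ} (hs : s ∈ Set.Ioo (0:ℝ) 1) :
    ContinuousAt (ff α b j k) s := by
  have h1 : ContinuousAt (fun t : ℝ => (1 - t) ^ α) s := by
    refine ContinuousAt.rpow_const ?_ (Or.inl ?_)
    · exact (continuous_const.sub continuous_id).continuousAt
    · have : (0:ℝ) < 1 - s := by linarith [hs.2]
      exact ne_of_gt this
  exact ((((continuous_jacQ α b j).continuousAt.mul
      (continuous_jacQ α b k).continuousAt).mul h1).mul (continuous_pow b).continuousAt)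

lemma ff_intervalIntegrable {α : ℝ} (b j k : ℕ) {s : ℝ} (hs : s ∈ Set.Ioo (0:ℝ) 1) :
    IntervalIntegrable (ff α b j k) volume 0 s := by
  apply ContinuousOn.intervalIntegrable
  rw [Set.uIcc_of_le hs.1.le]
  have h1 : ContinuousOn (fun t : ℝ => (1 - t) ^ α) (Set.Icc 0 s) := by
    refine ContinuousOn.rpow_const ((continuous_const.sub continuous_id).continuousOn) ?_
    intro x hx
    left
    have : (0:ℝ) < 1 - x := by
      have := hx.2
      have := hs.2
      linarith
    exact ne_of_gt this
  exact ((((continuous_jacQ α b j).continuousOn.mul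
      (continuous_jacQ α b k).continuousOn).mul h1).mul (continuous_pow b).continuousOn)

lemma ff_hasDerivAt {α : ℝ} (b j k : ℕ) {s : ℝ} (hs : s ∈ Set.Ioo (0:ℝ) 1) :
    HasDerivAt (fun x => ∫ t in (0:ℝ)..x, ff α b j k t) (ff α b j k s) s := by
  refine intervalIntegral.integral_hasDerivAt_right (ff_intervalIntegrable b j k hs) ?_
    (ff_continuousAt b j k hs)
  exact ContinuousAt.stronglyMeasurableAtFilter isOpen_Ioo
    (fun x hx => ff_continuousAt b j k hx) s hs

/-- The indicator symbol `a_s(r) = 1_{r² < s}`. -/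
def indf (s : ℝ) : ℝ → ℂ := fun r => if r ^ 2 < s then 1 else 0

lemma indf_LinfLim {s : ℝ} (hs : s ∈ Set.Ioo (0:ℝ) 1) : LinfLim (indf s) := by
  refine ⟨?_, ⟨1, fun r _ => ?_⟩, 0, ?_⟩
  · exact Measurable.ite (measurableSet_lt (measurable_id.pow_const 2) measurable_const)
      measurable_const measurable_const
  · unfold indf
    split <;> simp
  · have hopen : IsOpen {r : ℝ | s < r ^ 2} := isOpen_lt continuous_const (continuous_pow 2)
    have hmem : {r : ℝ | s < r ^ 2} ∈ nhdsWithin (1:ℝ) (Set.Ico (0:ℝ) 1) := by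
      apply mem_nhdsWithin_of_mem_nhds
      exact hopen.mem_nhds (by simpa using hs.2)
    have hev : indf s =ᶠ[nhdsWithin (1:ℝ) (Set.Ico (0:ℝ) 1)] (fun _ => (0:ℂ)) := by
      filter_upwards [hmem] with r hr
      simp only [indf, if_neg (not_lt.mpr (le_of_lt hr))]
    exact (tendsto_congr' hev).mpr tendsto_const_nhds

lemma gammaEnt_ind {α : ℝ} {ξ : ℤ} {s : ℝ} (hs : s ∈ Set.Ioo (0:ℝ) 1) (j k : ℕ) :
    gammaEnt α (indf s) ξ j k =
      ((jacCoef α ξ.natAbs j * jacCoef α ξ.natAbs k : ℝ) : ℂ) *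
        ((∫ t in (0:ℝ)..s, ff α ξ.natAbs j k t : ℝ) : ℂ) := by
  unfold gammaEnt
  congr 1
  have key : ∫ t in (0:ℝ)..1, indf s (Real.sqrt t) *
      ((jacQ α ξ.natAbs j t * jacQ α ξ.natAbs k t * (1 - t) ^ α * t ^ (ξ.natAbs) : ℝ) : ℂ)
      = ∫ t in (0:ℝ)..s, ((ff α ξ.natAbs j k t : ℝ) : ℂ) := by
    rw [intervalIntegral.integral_of_le (zero_le_one), intervalIntegral.integral_of_le hs.1.le]
    have hcong : ∀ t ∈ Set.Ioc (0:ℝ) 1,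
        indf s (Real.sqrt t) *
          ((jacQ α ξ.natAbs j t * jacQ α ξ.natAbs k t * (1 - t) ^ α * t ^ (ξ.natAbs) : ℝ) : ℂ)
        = (Set.Iio s).indicator (fun t => ((ff α ξ.natAbs j k t : ℝ) : ℂ)) t := by
      intro t ht
      have hsq : Real.sqrt t ^ 2 = t := Real.sq_sqrt ht.1.le
      simp only [indf, hsq, Set.indicator_apply, Set.mem_Iio, ff]
      split <;> simp
    rw [setIntegral_congr_fun measurableSet_Ioc hcong, setIntegral_indicator measurableSet_Iio]
    have hset : Set.Ioc (0:ℝ) 1 ∩ Set.Iio s = Set.Ioo 0 s := by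
      ext x
      simp only [Set.mem_inter_iff, Set.mem_Ioc, Set.mem_Iio, Set.mem_Ioo]
      constructor
      · rintro ⟨⟨h1, _⟩, h2⟩; exact ⟨h1, h2⟩
      · rintro ⟨h1, h2⟩; exact ⟨⟨h1, le_of_lt (lt_trans h2 hs.2)⟩, h2⟩
    rw [hset, ← integral_Ioc_eq_integral_Ioo]
  rw [key, intervalIntegral.integral_ofReal]

/-- Entry function of `γ(a_s)` as a function of `s`. -/
def GG (α : ℝ) (ξ : ℤ) (j k : ℕ) (s : ℝ) : ℂ := gammaEnt α (indf s) ξ j k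

/-- Derivative of `GG` in `s`. -/
def GG' (α : ℝ) (ξ : ℤ) (j k : ℕ) (s : ℝ) : ℂ :=
  ((jacCoef α ξ.natAbs j * jacCoef α ξ.natAbs k * ff α ξ.natAbs j k s : ℝ) : ℂ)

lemma GG_hasDerivAt {α : ℝ} (ξ : ℤ) (j k : ℕ) {s : ℝ} (hs : s ∈ Set.Ioo (0:ℝ) 1) :
    HasDerivAt (GG α ξ j k) (GG' α ξ j k s) s := by
  have hF : HasDerivAt (fun x => ((jacCoef α ξ.natAbs j * jacCoef α ξ.natAbs k : ℝ) : ℂ) *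
      ((∫ t in (0:ℝ)..x, ff α ξ.natAbs j k t : ℝ) : ℂ))
      (((jacCoef α ξ.natAbs j * jacCoef α ξ.natAbs k : ℝ) : ℂ) *
        ((ff α ξ.natAbs j k s : ℝ) : ℂ)) s := by
    exact ((ff_hasDerivAt ξ.natAbs j k hs).ofReal_comp).const_mul _
  have hev : GG α ξ j k =ᶠ[nhds s] (fun x => ((jacCoef α ξ.natAbs j * jacCoef α ξ.natAbs k : ℝ) : ℂ) *
      ((∫ t in (0:ℝ)..x, ff α ξ.natAbs j k t : ℝ) : ℂ)) := by
    filter_upwards [isOpen_Ioo.mem_nhds hs] with x hx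
    exact gammaEnt_ind hx j k
  have := hF.congr_of_eventuallyEq hev
  rw [show GG' α ξ j k s = ((jacCoef α ξ.natAbs j * jacCoef α ξ.natAbs k : ℝ) : ℂ) *
      ((ff α ξ.natAbs j k s : ℝ) : ℂ) by unfold GG'; push_cast; ring]
  exact this

end Stmt13Aux
namespace Stmt13Aux
open Polynomial

lemma gbinom_zero (x : ℝ) : gbinom x 0 = 1 := by simp [gbinom]

lemma jacQ_zero' (α β t : ℝ) : jacQ α β 0 t = 1 := by simp [jacQ, gbinom]

lemma gbinom_lead_pos {α : ℝ} (hα : -1 < α) (b m : ℕ) : 0 < gbinom (α + b + m + m) m := by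
  unfold gbinom
  apply div_pos
  · apply Finset.prod_pos
    intro i hi
    rw [Finset.mem_range] at hi
    have h1 : (i:ℝ) + 1 ≤ m := by exact_mod_cast hi
    have hb : (0:ℝ) ≤ b := Nat.cast_nonneg b
    linarith
  · exact_mod_cast Nat.factorial_pos m

lemma jacCoef_pos {α : ℝ} (hα : -1 < α) (b m : ℕ) : 0 < jacCoef α b m := by
  unfold jacCoef
  apply Real.sqrt_pos.mpr
  have hb : (0:ℝ) ≤ b := Nat.cast_nonneg b
  have hm : (0:ℝ) ≤ m := Nat.cast_nonneg m
  apply div_pos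
  · refine mul_pos (mul_pos (by linarith) (Real.Gamma_pos_of_pos (by linarith))) ?_
    exact_mod_cast Nat.factorial_pos m
  · exact mul_pos (Real.Gamma_pos_of_pos (by linarith)) (Real.Gamma_pos_of_pos (by linarith))

/-- The shifted Jacobi polynomial as an element of `Polynomial ℝ`. -/
def qR (α : ℝ) (b : ℕ) (m : ℕ) : Polynomial ℝ :=
  ∑ k ∈ Finset.range (m+1),
    C (gbinom (α + (b:ℝ) + m + k) k * gbinom ((b:ℝ) + m) (m - k) * (-1 : ℝ) ^ (m - k)) * X ^ k

lemma qR_eval (α : ℝ) (b m : ℕ) (t : ℝ) : (qR α b m).eval t = jacQ α b m t := by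
  simp [qR, jacQ, eval_finset_sum]

lemma qR_coeff_of_lt (α : ℝ) (b : ℕ) {m k : ℕ} (h : m < k) : (qR α b m).coeff k = 0 := by
  simp only [qR, finset_sum_coeff, coeff_C_mul, coeff_X_pow]
  apply Finset.sum_eq_zero
  intro i hi
  rw [Finset.mem_range] at hi
  rw [if_neg (by omega), mul_zero]

lemma qR_coeff_self (α : ℝ) (b m : ℕ) :
    (qR α b m).coeff m = gbinom (α + (b:ℝ) + m + m) m := by
  simp only [qR, finset_sum_coeff, coeff_C_mul, coeff_X_pow, mul_ite, mul_one, mul_zero]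
  rw [Finset.sum_ite_eq (Finset.range (m+1)) m, if_pos (Finset.self_mem_range_succ m)]
  simp [gbinom_zero]

/-- The shifted Jacobi polynomial as an element of `Polynomial ℂ`. -/
def cq (α : ℝ) (b : ℕ) (m : ℕ) : Polynomial ℂ := (qR α b m).map Complex.ofRealHom

lemma cq_eval (α : ℝ) (b m : ℕ) (s : ℝ) :
    (cq α b m).eval (s : ℂ) = ((jacQ α b m s : ℝ) : ℂ) := by
  rw [cq, eval_map, show ((s:ℂ)) = Complex.ofRealHom s from rfl, eval₂_at_apply, qR_eval]
  rfl

lemma cq_coeff_self_ne {α : ℝ} (hα : -1 < α) (b m : ℕ) : (cq α b m).coeff m ≠ 0 := by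
  rw [cq, coeff_map, qR_coeff_self]
  simp only [Complex.ofRealHom_eq_coe, ne_eq, Complex.ofReal_eq_zero]
  exact ne_of_gt (gbinom_lead_pos hα b m)

lemma cq_coeff_of_lt (α : ℝ) (b : ℕ) {m k : ℕ} (h : m < k) : (cq α b m).coeff k = 0 := by
  rw [cq, coeff_map, qR_coeff_of_lt α b h]
  simp

lemma sum_C_mul_eq_zero {d : ℕ} (q : ℕ → Polynomial ℂ)
    (hself : ∀ m, (q m).coeff m ≠ 0) (hlt : ∀ m k, m < k → (q m).coeff k = 0)
    (c : Fin d → ℂ) (h : ∑ j : Fin d, C (c j) * q (j : ℕ) = 0) : ∀ j, c j = 0 := by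
  by_contra hc
  push_neg at hc
  obtain ⟨j, hj⟩ := hc
  classical
  set S : Finset (Fin d) := Finset.univ.filter (fun i => c i ≠ 0) with hS
  have hSne : S.Nonempty := ⟨j, by simp [hS, hj]⟩
  set j0 := S.max' hSne with hj0
  have hj0S : j0 ∈ S := S.max'_mem hSne
  have hcj0 : c j0 ≠ 0 := by
    have := hj0S
    rw [hS, Finset.mem_filter] at this
    exact this.2
  have h0 : (∑ i : Fin d, C (c i) * q (i:ℕ)).coeff (j0 : ℕ) = 0 := by rw [h]; simp
  rw [finset_sum_coeff] at h0
  simp only [coeff_C_mul] at h0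
  rw [Finset.sum_eq_single j0] at h0
  · rcases mul_eq_zero.mp h0 with h' | h'
    · exact hcj0 h'
    · exact hself (j0:ℕ) h'
  · intro i _ hi
    by_cases hci : c i = 0
    · rw [hci, zero_mul]
    · have hiS : i ∈ S := by rw [hS, Finset.mem_filter]; exact ⟨Finset.mem_univ i, hci⟩
      have hle : i ≤ j0 := S.le_max' i hiS
      have hlt' : (i : ℕ) < (j0 : ℕ) := by
        have : i < j0 := lt_of_le_of_ne hle hi
        exact_mod_cast this
      rw [hlt (i:ℕ) (j0:ℕ) hlt', mul_zero]
  · intro hj0'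
    exact absurd (Finset.mem_univ j0) hj0'

/-- `P_w` as a complex polynomial. -/
def cP {d : ℕ} (α : ℝ) (b : ℕ) (w : Fin d → ℂ) : Polynomial ℂ :=
  ∑ j : Fin d, C (w j * ((jacCoef α b j : ℝ) : ℂ)) * cq α b (j : ℕ)

lemma cP_eval {d : ℕ} (α : ℝ) (b : ℕ) (w : Fin d → ℂ) (s : ℝ) :
    (cP α b w).eval (s : ℂ) =
      ∑ j : Fin d, w j * ((jacCoef α b j : ℝ) : ℂ) * ((jacQ α b j s : ℝ) : ℂ) := by
  rw [cP, eval_finset_sum]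
  exact Finset.sum_congr rfl fun j _ => by rw [eval_mul, eval_C, cq_eval]

lemma cP_inj {d : ℕ} {α : ℝ} (hα : -1 < α) (b : ℕ) (w : Fin d → ℂ)
    (h : cP α b w = 0) : ∀ j, w j = 0 := by
  have := sum_C_mul_eq_zero (cq α b) (fun m => cq_coeff_self_ne hα b m)
    (fun m k hk => cq_coeff_of_lt α b hk) (fun j => w j * ((jacCoef α b j : ℝ) : ℂ)) h
  intro j
  have hj := this j
  rcases mul_eq_zero.mp hj with h' | h'
  · exact h'
  · exact absurd h' (by exact_mod_cast ne_of_gt (jacCoef_pos hα b j))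

lemma cP_sub_smul {d : ℕ} (α : ℝ) (b : ℕ) (u v : Fin d → ℂ) (μ : ℂ) :
    cP α b (fun j => u j - μ * v j) = cP α b u - C μ * cP α b v := by
  unfold cP
  rw [Finset.mul_sum, ← Finset.sum_sub_distrib]
  refine Finset.sum_congr rfl fun j _ => ?_
  rw [← mul_assoc, ← C_mul, ← sub_mul, ← C_sub]
  ring_nf

lemma real_roots_finite (p : Polynomial ℂ) (hp : p ≠ 0) :
    {s : ℝ | p.eval (s:ℂ) = 0}.Finite := by
  have hfin : {z : ℂ | p.IsRoot z}.Finite := p.finite_setOf_isRoot hp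
  have : {s : ℝ | p.eval (s:ℂ) = 0} = (fun s : ℝ => (s:ℂ)) ⁻¹' {z | p.IsRoot z} := rfl
  rw [this]
  exact Set.Finite.preimage (Complex.ofReal_injective.injOn) hfin

end Stmt13Aux
namespace Stmt13Aux
open MeasureTheory Filter

lemma innerForm_mul (n : ℕ) (α : ℝ) (ξ : ℤ) (s s' : ℝ) (w : Fin (dd n ξ) → ℂ) :
    innerForm (gammaMat n α (indf s) ξ * gammaMat n α (indf s') ξ) w
      = ∑ j : Fin (dd n ξ), ∑ l : Fin (dd n ξ), (starRingEnd ℂ) (w j) *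
          (∑ k : Fin (dd n ξ), GG α ξ (j:ℕ) (k:ℕ) s * GG α ξ (k:ℕ) (l:ℕ) s') * w l := by
  simp only [innerForm, Matrix.mul_apply, gammaMat, Matrix.of_apply, GG]

lemma hasDerivAt_S {α : ℝ} {ξ : ℤ} (n : ℕ) (w : Fin (dd n ξ) → ℂ) {s : ℝ} (s' : ℝ)
    (hs : s ∈ Set.Ioo (0:ℝ) 1) :
    HasDerivAt (fun x => ∑ j : Fin (dd n ξ), ∑ l : Fin (dd n ξ), (starRingEnd ℂ) (w j) *
        (∑ k : Fin (dd n ξ), GG α ξ (j:ℕ) (k:ℕ) x * GG α ξ (k:ℕ) (l:ℕ) s') * w l)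
      (∑ j : Fin (dd n ξ), ∑ l : Fin (dd n ξ), (starRingEnd ℂ) (w j) *
        (∑ k : Fin (dd n ξ), GG' α ξ (j:ℕ) (k:ℕ) s * GG α ξ (k:ℕ) (l:ℕ) s') * w l) s := by
  refine HasDerivAt.fun_sum fun j _ => ?_
  refine HasDerivAt.fun_sum fun l _ => ?_
  refine HasDerivAt.mul_const ?_ _
  refine HasDerivAt.const_mul _ ?_
  exact HasDerivAt.fun_sum fun k _ => (GG_hasDerivAt ξ (j:ℕ) (k:ℕ) hs).mul_const _

lemma hasDerivAt_D {α : ℝ} {ξ : ℤ} (n : ℕ) (w : Fin (dd n ξ) → ℂ) (s : ℝ) {s' : ℝ}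
    (hs' : s' ∈ Set.Ioo (0:ℝ) 1) :
    HasDerivAt (fun y => ∑ j : Fin (dd n ξ), ∑ l : Fin (dd n ξ), (starRingEnd ℂ) (w j) *
        (∑ k : Fin (dd n ξ), GG' α ξ (j:ℕ) (k:ℕ) s * GG α ξ (k:ℕ) (l:ℕ) y) * w l)
      (∑ j : Fin (dd n ξ), ∑ l : Fin (dd n ξ), (starRingEnd ℂ) (w j) *
        (∑ k : Fin (dd n ξ), GG' α ξ (j:ℕ) (k:ℕ) s * GG' α ξ (k:ℕ) (l:ℕ) s') * w l) s' := by
  refine HasDerivAt.fun_sum fun j _ => ?_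
  refine HasDerivAt.fun_sum fun l _ => ?_
  refine HasDerivAt.mul_const ?_ _
  refine HasDerivAt.const_mul _ ?_
  exact HasDerivAt.fun_sum fun k _ => (GG_hasDerivAt ξ (k:ℕ) (l:ℕ) hs').const_mul _

lemma eq_of_hasDerivAt {F G : ℝ → ℂ} {D E : ℂ} {s : ℝ} (hs : s ∈ Set.Ioo (0:ℝ) 1)
    (hF : HasDerivAt F D s) (hG : HasDerivAt G E s)
    (heq : ∀ x ∈ Set.Ioo (0:ℝ) 1, F x = G x) : D = E := by
  have hev : G =ᶠ[nhds s] F := by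
    filter_upwards [isOpen_Ioo.mem_nhds hs] with x hx
    exact (heq x hx).symm
  have hG' : HasDerivAt G D s := hF.congr_of_eventuallyEq hev
  exact (hG'.unique hG)

lemma sum_factor {α : ℝ} {ξ : ℤ} (n : ℕ) (w : Fin (dd n ξ) → ℂ) (s s' : ℝ) :
    ∑ j : Fin (dd n ξ), ∑ l : Fin (dd n ξ), (starRingEnd ℂ) (w j) *
        (∑ k : Fin (dd n ξ), GG' α ξ (j:ℕ) (k:ℕ) s * GG' α ξ (k:ℕ) (l:ℕ) s') * w l
      = ((((1-s)^α * s^(ξ.natAbs)) * ((1-s')^α * s'^(ξ.natAbs)) : ℝ) : ℂ) *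
        ((∑ j : Fin (dd n ξ), (starRingEnd ℂ) (w j) * ((jacCoef α ξ.natAbs (j:ℕ) : ℝ):ℂ) *
            ((jacQ α ξ.natAbs (j:ℕ) s : ℝ):ℂ)) *
         (∑ k : Fin (dd n ξ), ((jacCoef α ξ.natAbs (k:ℕ) ^ 2 * jacQ α ξ.natAbs (k:ℕ) s *
            jacQ α ξ.natAbs (k:ℕ) s' : ℝ):ℂ)) *
         (∑ l : Fin (dd n ξ), w l * ((jacCoef α ξ.natAbs (l:ℕ) : ℝ):ℂ) *
            ((jacQ α ξ.natAbs (l:ℕ) s' : ℝ):ℂ))) := by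
  simp only [GG', ff, Finset.mul_sum, Finset.sum_mul]
  conv_lhs => rw [Finset.sum_comm]
  refine Finset.sum_congr rfl fun l _ => ?_
  rw [Finset.sum_comm]
  refine Finset.sum_congr rfl fun k _ => ?_
  refine Finset.sum_congr rfl fun j _ => ?_
  push_cast
  ring

end Stmt13Aux
namespace Stmt13Aux
open Polynomial

lemma conj_PL {d : ℕ} (α : ℝ) (b : ℕ) (w : Fin d → ℂ) (s : ℝ) :
    ∑ j : Fin d, (starRingEnd ℂ) (w j) * ((jacCoef α b (j:ℕ) : ℝ):ℂ) * ((jacQ α b (j:ℕ) s : ℝ):ℂ)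
      = (starRingEnd ℂ) ((cP α b w).eval (s:ℂ)) := by
  rw [cP_eval, map_sum]
  refine Finset.sum_congr rfl fun j _ => ?_
  simp [map_mul, Complex.conj_ofReal]

/-- The Christoffel–Darboux-type kernel as a polynomial in the second variable. -/
def cK (d : ℕ) (α : ℝ) (b : ℕ) (s₀ : ℝ) : Polynomial ℂ :=
  ∑ k : Fin d, Polynomial.C (((jacCoef α b (k:ℕ) ^ 2 * jacQ α b (k:ℕ) s₀ : ℝ)):ℂ) * cq α b (k:ℕ)

lemma cK_eval (d : ℕ) (α : ℝ) (b : ℕ) (s₀ s' : ℝ) :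
    (cK d α b s₀).eval (s':ℂ) =
      ∑ k : Fin d, ((jacCoef α b (k:ℕ) ^ 2 * jacQ α b (k:ℕ) s₀ * jacQ α b (k:ℕ) s' : ℝ):ℂ) := by
  rw [cK, eval_finset_sum]
  refine Finset.sum_congr rfl fun k _ => ?_
  rw [eval_mul, eval_C, cq_eval]
  push_cast
  ring

lemma cK_ne_zero {α : ℝ} (hα : -1 < α) {d : ℕ} (hd : 0 < d) (b : ℕ) (s₀ : ℝ) :
    cK d α b s₀ ≠ 0 := by
  intro h
  have h1 : (cK d α b s₀).eval (s₀:ℂ) =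
      ((∑ k : Fin d, jacCoef α b (k:ℕ) ^ 2 * jacQ α b (k:ℕ) s₀ * jacQ α b (k:ℕ) s₀ : ℝ) : ℂ) := by
    rw [cK_eval]
    push_cast
    rfl
  have h2 : (0:ℝ) < ∑ k : Fin d, jacCoef α b (k:ℕ) ^ 2 * jacQ α b (k:ℕ) s₀ * jacQ α b (k:ℕ) s₀ := by
    refine Finset.sum_pos' (fun k _ => ?_) ⟨⟨0, hd⟩, Finset.mem_univ _, ?_⟩
    · have : jacCoef α b (k:ℕ) ^ 2 * jacQ α b (k:ℕ) s₀ * jacQ α b (k:ℕ) s₀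
          = (jacCoef α b (k:ℕ) * jacQ α b (k:ℕ) s₀) ^ 2 := by ring
      rw [this]
      exact sq_nonneg _
    · have hz : ((⟨0, hd⟩ : Fin d) : ℕ) = 0 := rfl
      rw [hz, jacQ_zero']
      have := jacCoef_pos hα b 0
      nlinarith
  rw [h] at h1
  simp only [eval_zero] at h1
  have := h1.symm
  rw [Complex.ofReal_eq_zero] at this
  exact absurd this (ne_of_gt h2)

lemma cP_ne_zero {d : ℕ} {α : ℝ} (hα : -1 < α) (b : ℕ) {w : Fin d → ℂ} (hw : w ≠ 0) :
    cP α b w ≠ 0 := by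
  intro h
  apply hw
  funext j
  simpa using cP_inj hα b w h j

end Stmt13Aux
/-- separation of pure states associated to the same frequency `ξ`. -/
theorem statement13 (n : ℕ) (hn : 1 ≤ n) (α : ℝ) (hα : -1 < α) (ξ : ℤ)
    (hξ : 1 - (n : ℤ) ≤ ξ)
    (u v : Fin (dd n ξ) → ℂ)
    (hu : ∑ j, ‖u j‖ ^ 2 = 1) (hv : ∑ j, ‖v j‖ ^ 2 = 1)
    (huv : LinearIndependent ℂ ![u, v]) :
    ∃ X ∈ StarAlgebra.adjoin ℂ
        {A : ∀ η : Om n, Matrix (Fin (dd n η.1)) (Fin (dd n η.1)) ℂ |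
          ∃ a : ℝ → ℂ, LinfLim a ∧ A = fun η : Om n => gammaMat n α a η.1},
      innerForm (X ⟨ξ, hξ⟩) u ≠ innerForm (X ⟨ξ, hξ⟩) v := by
  classical
  by_contra hcon
  push_neg at hcon
  have hd : 0 < dd n ξ := by unfold dd; omega
  -- the generators associated to indicator symbols
  have hgen : ∀ s ∈ Set.Ioo (0:ℝ) 1,
      (fun η : Om n => gammaMat n α (Stmt13Aux.indf s) η.1) ∈ StarAlgebra.adjoin ℂ
        {A : ∀ η : Om n, Matrix (Fin (dd n η.1)) (Fin (dd n η.1)) ℂ |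
          ∃ a : ℝ → ℂ, LinfLim a ∧ A = fun η : Om n => gammaMat n α a η.1} := by
    intro s hs
    exact StarAlgebra.subset_adjoin ℂ _ ⟨Stmt13Aux.indf s, Stmt13Aux.indf_LinfLim hs, rfl⟩
  -- Step 1: equality of quadratic forms on products of two generators
  have h1 : ∀ s ∈ Set.Ioo (0:ℝ) 1, ∀ s' ∈ Set.Ioo (0:ℝ) 1,
      (∑ j : Fin (dd n ξ), ∑ l : Fin (dd n ξ), (starRingEnd ℂ) (u j) *
        (∑ k : Fin (dd n ξ), Stmt13Aux.GG α ξ (j:ℕ) (k:ℕ) s * Stmt13Aux.GG α ξ (k:ℕ) (l:ℕ) s') * u l)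
      = (∑ j : Fin (dd n ξ), ∑ l : Fin (dd n ξ), (starRingEnd ℂ) (v j) *
        (∑ k : Fin (dd n ξ), Stmt13Aux.GG α ξ (j:ℕ) (k:ℕ) s * Stmt13Aux.GG α ξ (k:ℕ) (l:ℕ) s') * v l) := by
    intro s hs s' hs'
    have hX := hcon _ (mul_mem (hgen s hs) (hgen s' hs'))
    rw [← Stmt13Aux.innerForm_mul n α ξ s s' u, ← Stmt13Aux.innerForm_mul n α ξ s s' v]
    exact hX
  -- Step 2: differentiate in s
  have h2 : ∀ s ∈ Set.Ioo (0:ℝ) 1, ∀ s' ∈ Set.Ioo (0:ℝ) 1,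
      (∑ j : Fin (dd n ξ), ∑ l : Fin (dd n ξ), (starRingEnd ℂ) (u j) *
        (∑ k : Fin (dd n ξ), Stmt13Aux.GG' α ξ (j:ℕ) (k:ℕ) s * Stmt13Aux.GG α ξ (k:ℕ) (l:ℕ) s') * u l)
      = (∑ j : Fin (dd n ξ), ∑ l : Fin (dd n ξ), (starRingEnd ℂ) (v j) *
        (∑ k : Fin (dd n ξ), Stmt13Aux.GG' α ξ (j:ℕ) (k:ℕ) s * Stmt13Aux.GG α ξ (k:ℕ) (l:ℕ) s') * v l) := by
    intro s hs s' hs'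
    exact Stmt13Aux.eq_of_hasDerivAt hs (Stmt13Aux.hasDerivAt_S n u s' hs)
      (Stmt13Aux.hasDerivAt_S n v s' hs) (fun x hx => h1 x hx s' hs')
  -- Step 3: differentiate in s'
  have h3 : ∀ s ∈ Set.Ioo (0:ℝ) 1, ∀ s' ∈ Set.Ioo (0:ℝ) 1,
      (∑ j : Fin (dd n ξ), ∑ l : Fin (dd n ξ), (starRingEnd ℂ) (u j) *
        (∑ k : Fin (dd n ξ), Stmt13Aux.GG' α ξ (j:ℕ) (k:ℕ) s * Stmt13Aux.GG' α ξ (k:ℕ) (l:ℕ) s') * u l)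
      = (∑ j : Fin (dd n ξ), ∑ l : Fin (dd n ξ), (starRingEnd ℂ) (v j) *
        (∑ k : Fin (dd n ξ), Stmt13Aux.GG' α ξ (j:ℕ) (k:ℕ) s * Stmt13Aux.GG' α ξ (k:ℕ) (l:ℕ) s') * v l) := by
    intro s hs s' hs'
    exact Stmt13Aux.eq_of_hasDerivAt hs' (Stmt13Aux.hasDerivAt_D n u s hs')
      (Stmt13Aux.hasDerivAt_D n v s hs') (fun y hy => h2 s hs y hy)
  -- Step 4/5: factor and cancel the positive weight
  have h5 : ∀ s ∈ Set.Ioo (0:ℝ) 1, ∀ s' ∈ Set.Ioo (0:ℝ) 1,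
      ((∑ j : Fin (dd n ξ), (starRingEnd ℂ) (u j) * ((jacCoef α ξ.natAbs (j:ℕ) : ℝ):ℂ) *
            ((jacQ α ξ.natAbs (j:ℕ) s : ℝ):ℂ)) *
         (∑ k : Fin (dd n ξ), ((jacCoef α ξ.natAbs (k:ℕ) ^ 2 * jacQ α ξ.natAbs (k:ℕ) s *
            jacQ α ξ.natAbs (k:ℕ) s' : ℝ):ℂ)) *
         (∑ l : Fin (dd n ξ), u l * ((jacCoef α ξ.natAbs (l:ℕ) : ℝ):ℂ) *
            ((jacQ α ξ.natAbs (l:ℕ) s' : ℝ):ℂ)))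
      = ((∑ j : Fin (dd n ξ), (starRingEnd ℂ) (v j) * ((jacCoef α ξ.natAbs (j:ℕ) : ℝ):ℂ) *
            ((jacQ α ξ.natAbs (j:ℕ) s : ℝ):ℂ)) *
         (∑ k : Fin (dd n ξ), ((jacCoef α ξ.natAbs (k:ℕ) ^ 2 * jacQ α ξ.natAbs (k:ℕ) s *
            jacQ α ξ.natAbs (k:ℕ) s' : ℝ):ℂ)) *
         (∑ l : Fin (dd n ξ), v l * ((jacCoef α ξ.natAbs (l:ℕ) : ℝ):ℂ) *
            ((jacQ α ξ.natAbs (l:ℕ) s' : ℝ):ℂ))) := by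
    intro s hs s' hs'
    have h4 := h3 s hs s' hs'
    rw [Stmt13Aux.sum_factor, Stmt13Aux.sum_factor] at h4
    have hw : ((((1-s)^α * s^(ξ.natAbs)) * ((1-s')^α * s'^(ξ.natAbs)) : ℝ) : ℂ) ≠ 0 := by
      rw [Complex.ofReal_ne_zero]
      have w1 : (0:ℝ) < (1-s)^α := Real.rpow_pos_of_pos (by linarith [hs.2]) α
      have w2 : (0:ℝ) < s^(ξ.natAbs) := pow_pos hs.1 _
      have w3 : (0:ℝ) < (1-s')^α := Real.rpow_pos_of_pos (by linarith [hs'.2]) α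
      have w4 : (0:ℝ) < s'^(ξ.natAbs) := pow_pos hs'.1 _
      positivity
    exact mul_left_cancel₀ hw h4
  -- rewrite the factored identity in terms of polynomial evaluations
  have h6 : ∀ s ∈ Set.Ioo (0:ℝ) 1, ∀ s' ∈ Set.Ioo (0:ℝ) 1,
      (starRingEnd ℂ) ((Stmt13Aux.cP α ξ.natAbs u).eval (s:ℂ)) *
          (Stmt13Aux.cK (dd n ξ) α ξ.natAbs s).eval (s':ℂ) *
          (Stmt13Aux.cP α ξ.natAbs u).eval (s':ℂ)
        = (starRingEnd ℂ) ((Stmt13Aux.cP α ξ.natAbs v).eval (s:ℂ)) *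
          (Stmt13Aux.cK (dd n ξ) α ξ.natAbs s).eval (s':ℂ) *
          (Stmt13Aux.cP α ξ.natAbs v).eval (s':ℂ) := by
    intro s hs s' hs'
    have := h5 s hs s' hs'
    rw [Stmt13Aux.conj_PL, Stmt13Aux.conj_PL, ← Stmt13Aux.cK_eval (dd n ξ) α ξ.natAbs s s',
      ← Stmt13Aux.cP_eval α ξ.natAbs u s', ← Stmt13Aux.cP_eval α ξ.natAbs v s'] at this
    exact this
  -- u is nonzero, so its polynomial has only finitely many real roots in (0,1)
  have hune : u ≠ 0 := by
    have := huv.ne_zero 0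
    simpa using this
  have hcPu : Stmt13Aux.cP α ξ.natAbs u ≠ 0 := Stmt13Aux.cP_ne_zero hα _ hune
  have hZ1 : {x : ℝ | (Stmt13Aux.cP α ξ.natAbs u).eval (x:ℂ) = 0}.Finite :=
    Stmt13Aux.real_roots_finite _ hcPu
  have hIoo : (Set.Ioo (0:ℝ) 1).Infinite :=
    Set.infinite_coe_iff.mp (Set.Ioo.infinite (by norm_num))
  obtain ⟨s₀, hs₀⟩ := (hIoo.diff hZ1).nonempty
  have hs₀I : s₀ ∈ Set.Ioo (0:ℝ) 1 := hs₀.1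
  have hPu : (Stmt13Aux.cP α ξ.natAbs u).eval (s₀:ℂ) ≠ 0 := hs₀.2
  have haune : (starRingEnd ℂ) ((Stmt13Aux.cP α ξ.natAbs u).eval (s₀:ℂ)) ≠ 0 := by
    rw [starRingEnd_apply]
    exact star_ne_zero.mpr hPu
  -- the kernel polynomial is nonzero; finitely many roots
  have hcK : Stmt13Aux.cK (dd n ξ) α ξ.natAbs s₀ ≠ 0 := Stmt13Aux.cK_ne_zero hα hd _ s₀
  have hZ2 : {x : ℝ | (Stmt13Aux.cK (dd n ξ) α ξ.natAbs s₀).eval (x:ℂ) = 0}.Finite :=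
    Stmt13Aux.real_roots_finite _ hcK
  set μ : ℂ := (starRingEnd ℂ) ((Stmt13Aux.cP α ξ.natAbs v).eval (s₀:ℂ)) /
    (starRingEnd ℂ) ((Stmt13Aux.cP α ξ.natAbs u).eval (s₀:ℂ)) with hμ
  -- the polynomial `p_u - μ p_v` vanishes on an infinite set, hence is zero
  have hr : Stmt13Aux.cP α ξ.natAbs (fun j => u j - μ * v j) = 0 := by
    by_contra hrne
    have hfin := Stmt13Aux.real_roots_finite _ hrne
    have hsub : (Set.Ioo (0:ℝ) 1 \ {x : ℝ | (Stmt13Aux.cK (dd n ξ) α ξ.natAbs s₀).eval (x:ℂ) = 0})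
        ⊆ {x : ℝ | (Stmt13Aux.cP α ξ.natAbs (fun j => u j - μ * v j)).eval (x:ℂ) = 0} := by
      intro x hx
      have hBne : (Stmt13Aux.cK (dd n ξ) α ξ.natAbs s₀).eval (x:ℂ) ≠ 0 := hx.2
      have heq := h6 s₀ hs₀I x hx.1
      have hstep : (starRingEnd ℂ) ((Stmt13Aux.cP α ξ.natAbs u).eval (s₀:ℂ)) *
          (Stmt13Aux.cP α ξ.natAbs u).eval (x:ℂ)
          = (starRingEnd ℂ) ((Stmt13Aux.cP α ξ.natAbs v).eval (s₀:ℂ)) *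
          (Stmt13Aux.cP α ξ.natAbs v).eval (x:ℂ) := by
        have hmul : ((starRingEnd ℂ) ((Stmt13Aux.cP α ξ.natAbs u).eval (s₀:ℂ)) *
            (Stmt13Aux.cP α ξ.natAbs u).eval (x:ℂ)
            - (starRingEnd ℂ) ((Stmt13Aux.cP α ξ.natAbs v).eval (s₀:ℂ)) *
            (Stmt13Aux.cP α ξ.natAbs v).eval (x:ℂ)) *
            (Stmt13Aux.cK (dd n ξ) α ξ.natAbs s₀).eval (x:ℂ) = 0 := by
          linear_combination heq
        rcases mul_eq_zero.mp hmul with h' | h'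
        · exact sub_eq_zero.mp h'
        · exact absurd h' hBne
      show (Stmt13Aux.cP α ξ.natAbs (fun j => u j - μ * v j)).eval (x:ℂ) = 0
      rw [Stmt13Aux.cP_sub_smul, Polynomial.eval_sub, Polynomial.eval_mul, Polynomial.eval_C,
        sub_eq_zero, hμ, div_mul_eq_mul_div, eq_div_iff haune]
      linear_combination hstep
    exact (Set.Infinite.mono hsub ((hIoo.diff hZ2))) hfin
  -- conclude that `u = μ • v`, contradicting linear independence
  have hall := Stmt13Aux.cP_inj hα _ _ hr
  have hμv : μ • v = u := by
    funext j
    have := hall j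
    have h' : u j - μ * v j = 0 := this
    simp only [Pi.smul_apply, smul_eq_mul]
    have := sub_eq_zero.mp h'
    linear_combination this.symm
  obtain ⟨-, hne⟩ := linearIndependent_fin2.mp huv
  exact hne μ (by simpa using hμv)
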